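/- Let W₀, W₁, V be locally finite preorders (Kripke frames whose relation is reflexive and transitive and which are locally finite), and let f₀ : W₀ → V and f₁ : W₁ → V be surjective p-morphisms. Define U = {(w₀,w₁) ∈ W₀ × W₁ | f₀(w₀) = f₁(w₁)} with the componentwise relation (w₀,w₁) ≺ (w₀',w₁') iff w₀ ≺ w₀' and w₁ ≺ w₁'. Then U is a locally finite preorder, the two projections π₀ : U → W₀ and π₁ : U → W₁ are surjective p-morphisms, and f₀ ∘ π₀ = f₁ ∘ π₁. -/
import Mathlib


/-- A p-morphism between Kripke frames `(W, rW)` and `(V, rV)`: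
a function that is stable and open. -/
def IsPMorphism {W V : Type*} (rW : W → W → Prop) (rV : V → V → Prop) (f : W → V) : Prop :=
  (∀ ⦃w w'⦄, rW w w' → rV (f w) (f w')) ∧
  (∀ w v', rV (f w) v' → ∃ w', rW w w' ∧ f w' = v')

/-- A Kripke frame `(W, r)` is locally finite if each set
`w* = {w' | Relation.ReflTransGen r w w'}` is finite. -/
def LocFin {W : Type*} (r : W → W → Prop) : Prop :=
  ∀ w : W, {w' | Relation.ReflTransGen r w w'}.Finite

/-- Let `W₀, W₁, V` be locally finite preorders and
`f₀ : W₀ → V`, `f₁ : W₁ → V` surjective p-morphisms.  Then the frame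
`U = {(w₀, w₁) | f₀ w₀ = f₁ w₁}` with the componentwise relation is a locally finite
preorder, the two projections are surjective p-morphisms, and `f₀ ∘ π₀ = f₁ ∘ π₁`. -/
theorem statement7 {W₀ W₁ V : Type*}
    (r₀ : W₀ → W₀ → Prop) (r₁ : W₁ → W₁ → Prop) (rV : V → V → Prop)
    (h₀refl : Reflexive r₀) (h₀trans : Transitive r₀) (h₀lf : LocFin r₀)
    (h₁refl : Reflexive r₁) (h₁trans : Transitive r₁) (h₁lf : LocFin r₁)
    (hVrefl : Reflexive rV) (hVtrans : Transitive rV) (hVlf : LocFin rV)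
    (f₀ : W₀ → V) (f₁ : W₁ → V)
    (hf₀ : IsPMorphism r₀ rV f₀) (hf₀s : Function.Surjective f₀)
    (hf₁ : IsPMorphism r₁ rV f₁) (hf₁s : Function.Surjective f₁) :
    letI U := {p : W₀ × W₁ // f₀ p.1 = f₁ p.2}
    letI rU : U → U → Prop := fun p q => r₀ p.1.1 q.1.1 ∧ r₁ p.1.2 q.1.2
    letI π₀ : U → W₀ := fun p => p.1.1
    letI π₁ : U → W₁ := fun p => p.1.2
    Reflexive rU ∧ Transitive rU ∧ LocFin rU ∧
    IsPMorphism rU r₀ π₀ ∧ Function.Surjective π₀ ∧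
    IsPMorphism rU r₁ π₁ ∧ Function.Surjective π₁ ∧
    f₀ ∘ π₀ = f₁ ∘ π₁ := by
  refine ⟨fun p => ⟨h₀refl _, h₁refl _⟩,
    fun p q s hpq hqs => ⟨h₀trans hpq.1 hqs.1, h₁trans hpq.2 hqs.2⟩,
    ?_, ⟨fun p q h => h.1, ?_⟩, ?_, ⟨fun p q h => h.2, ?_⟩, ?_, ?_⟩
  · -- LocFin
    intro p
    have hsub : {q | Relation.ReflTransGen (fun p q => r₀ p.1.1 q.1.1 ∧ r₁ p.1.2 q.1.2) p q}
        ⊆ Subtype.val ⁻¹' ({w' | Relation.ReflTransGen r₀ p.1.1 w'} ×ˢ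
          {w' | Relation.ReflTransGen r₁ p.1.2 w'}) := by
      intro q hq
      induction hq with
      | refl => exact ⟨Relation.ReflTransGen.refl, Relation.ReflTransGen.refl⟩
      | tail _ h ih => exact ⟨ih.1.tail h.1, ih.2.tail h.2⟩
    exact Set.Finite.subset (Set.Finite.preimage (Subtype.val_injective.injOn)
      ((h₀lf p.1.1).prod (h₁lf p.1.2))) hsub
  · -- openness of π₀
    rintro ⟨⟨w₀, w₁⟩, hp⟩ w₀' h
    obtain ⟨w₁', hr, he⟩ := hf₁.2 w₁ (f₀ w₀') (hp ▸ hf₀.1 h)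
    exact ⟨⟨⟨w₀', w₁'⟩, he.symm⟩, ⟨h, hr⟩, rfl⟩
  · -- surjectivity of π₀
    intro w₀
    obtain ⟨w₁, hw₁⟩ := hf₁s (f₀ w₀)
    exact ⟨⟨⟨w₀, w₁⟩, hw₁.symm⟩, rfl⟩
  · -- openness of π₁
    rintro ⟨⟨w₀, w₁⟩, hp⟩ w₁' h
    obtain ⟨w₀', hr, he⟩ := hf₀.2 w₀ (f₁ w₁') (hp ▸ hf₁.1 h)
    exact ⟨⟨⟨w₀', w₁'⟩, he⟩, ⟨hr, h⟩, rfl⟩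
  · intro w₁
    obtain ⟨w₀, hw₀⟩ := hf₀s (f₁ w₁)
    exact ⟨⟨⟨w₀, w₁⟩, hw₀⟩, rfl⟩
  · exact funext fun p => p.2
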